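/- arXiv:2109.00719 — 5 statements merged into one kernel-verified Lean document; each statement's English description precedes it below -/
import Mathlib

section
/- Let (Ω, 𝓕, P) be a probability space with a filtration (𝓕_t)_{t∈ℕ}, and let (θ_t)_{t∈ℕ} be a Δ(S)-valued process adapted to (𝓕_t) such that θ_t(s*) > 0 almost surely for every t, and such that for every s ∈ S the ratio process (θ_t(s)/θ_t(s*))_{t∈ℕ} is a martingale with respect to (𝓕_t). Then, almost surely, the sequence (θ_t) converges to a limit θ̄ ∈ Δ(S), and moreover θ̄(s*) > 0 almost surely. (This is Lemma 1 of the paper: the Bayesian belief sequence converges with probability 1 to a fixed-point belief.) -/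
open MeasureTheory Filter

/-- **Lemma 1 (belief convergence).** If the Δ(S)-valued adapted belief process has
`θ_t(s*) > 0` a.s. and all belief ratios `θ_t(s)/θ_t(s*)` are martingales, then almost
surely the beliefs converge to a limit `θ̄ ∈ Δ(S)` with `θ̄(s*) > 0`. -/
theorem belief_convergence
    {Ω : Type*} {mΩ : MeasurableSpace Ω} {P : Measure Ω} [IsProbabilityMeasure P]
    {S : Type*} [Fintype S] (sstar : S)
    (𝓕 : Filtration ℕ mΩ)
    (θ : ℕ → Ω → S → ℝ)
    (hΔ : ∀ t ω, θ t ω ∈ stdSimplex ℝ S)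
    (hadapted : ∀ s : S, Adapted 𝓕 (fun t ω => θ t ω s))
    (hpos : ∀ t, ∀ᵐ ω ∂P, 0 < θ t ω sstar)
    (hmart : ∀ s : S, Martingale (fun t ω => θ t ω s / θ t ω sstar) 𝓕 P) :
    ∀ᵐ ω ∂P, ∃ θbar ∈ stdSimplex ℝ S,
      0 < θbar sstar ∧ Tendsto (fun t => θ t ω) atTop (nhds θbar) := by
  set r : S → ℕ → Ω → ℝ := fun s t ω => θ t ω s / θ t ω sstar with hr
  have hr_nonneg : ∀ s t ω, 0 ≤ r s t ω := fun s t ω =>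
    div_nonneg ((hΔ t ω).1 s) ((hΔ t ω).1 sstar)
  -- integrals are constant
  have hint : ∀ s n, ∫ ω, r s n ω ∂P = ∫ ω, r s 0 ω ∂P := by
    intro s n
    have h := ((hmart s).2 0 n (Nat.zero_le n))
    calc ∫ ω, r s n ω ∂P = ∫ ω, (P[r s n | 𝓕 0]) ω ∂P := (integral_condExp (𝓕.le 0)).symm
    _ = ∫ ω, r s 0 ω ∂P := integral_congr_ae h
  -- L1 bound
  have hbdd : ∀ s n, eLpNorm (r s n) 1 P ≤ ENNReal.ofReal (∫ ω, r s 0 ω ∂P) := by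
    intro s n
    rw [eLpNorm_one_eq_lintegral_enorm, ← ofReal_integral_norm_eq_lintegral_enorm
      ((hmart s).integrable n), ← hint s n]
    refine le_of_eq (congrArg _ (integral_congr_ae ?_))
    filter_upwards with ω using (Real.norm_of_nonneg (hr_nonneg s n ω))
  -- a.s. convergence of each ratio
  have hconv : ∀ s, ∀ᵐ ω ∂P, ∃ c, Tendsto (fun n => r s n ω) atTop (nhds c) := fun s =>
    (hmart s).submartingale.exists_ae_tendsto_of_bdd (hbdd s)
  have hconv' : ∀ᵐ ω ∂P, ∀ s, ∃ c, Tendsto (fun n => r s n ω) atTop (nhds c) :=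
    (ae_all_iff).2 hconv
  have hpos' : ∀ᵐ ω ∂P, ∀ t, 0 < θ t ω sstar := (ae_all_iff).2 hpos
  filter_upwards [hconv', hpos'] with ω hc hp
  choose L hL using hc
  have hL_nonneg : ∀ s, 0 ≤ L s := fun s =>
    le_of_tendsto_of_tendsto tendsto_const_nhds (hL s)
      (Eventually.of_forall fun n => hr_nonneg s n ω)
  have hLstar : L sstar = 1 := by
    have : Tendsto (fun n => r sstar n ω) atTop (nhds 1) := by
      have : ∀ n, r sstar n ω = 1 := fun n => div_self (hp n).ne'
      simp only [this]; exact tendsto_const_nhds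
    exact tendsto_nhds_unique (hL sstar) this
  set c : ℝ := ∑ s, L s with hcdef
  have hc1 : (1:ℝ) ≤ c := by
    rw [hcdef, ← hLstar]
    exact Finset.single_le_sum (fun s _ => hL_nonneg s) (Finset.mem_univ sstar)
  have hcpos : 0 < c := lt_of_lt_of_le one_pos hc1
  -- sum of ratios tends to c
  have hsum : Tendsto (fun n => ∑ s, r s n ω) atTop (nhds c) :=
    tendsto_finset_sum _ (fun s _ => hL s)
  -- θ n ω s = r s n ω / (∑ s', r s' n ω)
  have hθeq : ∀ n s, θ n ω s = r s n ω / (∑ s', r s' n ω) := by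
    intro n s
    have hsum_eq : (∑ s', r s' n ω) = 1 / θ n ω sstar := by
      rw [hr]
      simp only
      rw [← Finset.sum_div, (hΔ n ω).2]
    rw [hsum_eq, hr]
    simp only
    rw [div_div_eq_mul_div, div_one, div_mul_cancel₀ _ (hp n).ne']
  refine ⟨fun s => L s / c, ⟨fun s => div_nonneg (hL_nonneg s) hcpos.le, ?_⟩, ?_, ?_⟩
  · rw [← Finset.sum_div, ← hcdef, div_self hcpos.ne']
  · show 0 < L sstar / c
    rw [hLstar]; positivity
  · rw [tendsto_pi_nhds]
    intro s
    have : Tendsto (fun n => r s n ω / (∑ s', r s' n ω)) atTop (nhds (L s / c)) :=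
      (hL s).div hsum hcpos.ne'
    exact this.congr (fun n => (hθeq n s).symm)
end

section
/- Let θ¹ ∈ Δ(S) with θ¹(s) > 0 for all s ∈ S, and for each j ≥ 1 let ℓ_j : S → (0,∞) be positive likelihood values. Define the Bayesian posterior sequence θ^t(s) := θ¹(s) ∏_{j=1}^{t−1} ℓ_j(s) / ( Σ_{s'∈S} θ¹(s') ∏_{j=1}^{t−1} ℓ_j(s') ) for t ≥ 1. Fix s ∈ S and D ∈ ℝ, and suppose: (a) there is a constant c > 0 with θ^t(s*) ≥ c for all t; and (b) (1/t) Σ_{j=1}^{t} log( ℓ_j(s)/ℓ_j(s*) ) → −D as t → ∞. Then (1/t) log θ^t(s) → −D as t → ∞. (This is the deterministic core of the exponential-rate claim in Theorem 1/Lemma 3: the posterior probability of a non-payoff-equivalent parameter decays exponentially at the rate given by the limiting average log-likelihood ratio.) -/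
open Filter

/-- **Exponential decay rate of posterior beliefs (deterministic core of Lemma 3).**
If the Bayesian posterior keeps the true parameter's probability bounded away from `0`
and the average log-likelihood ratio of `s` against `s*` tends to `−D`, then
`(1/t) log θ^t(s) → −D`. -/
theorem posterior_exponential_rate
    {S : Type*} [Fintype S] (sstar s : S)
    (θ1 : S → ℝ) (hθ1 : θ1 ∈ stdSimplex ℝ S) (hθ1pos : ∀ s', 0 < θ1 s')
    (ℓ : ℕ → S → ℝ) (hℓ : ∀ j s', 0 < ℓ j s')
    (D : ℝ)
    (post : ℕ → S → ℝ)
    (hpost : ∀ t s', post t s'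
      = θ1 s' * (∏ j ∈ Finset.range t, ℓ j s')
        / (∑ s'', θ1 s'' * ∏ j ∈ Finset.range t, ℓ j s''))
    (c : ℝ) (hc : 0 < c) (hlb : ∀ t, c ≤ post t sstar)
    (hrate : Tendsto
      (fun t : ℕ => (1 / (t : ℝ)) * ∑ j ∈ Finset.range t, Real.log (ℓ j s / ℓ j sstar))
      atTop (nhds (-D))) :
    Tendsto (fun t : ℕ => (1 / (t : ℝ)) * Real.log (post t s)) atTop (nhds (-D)) := by
  have hne : Nonempty S := ⟨sstar⟩
  have hnum : ∀ t s', 0 < θ1 s' * ∏ j ∈ Finset.range t, ℓ j s' := fun t s' =>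
    mul_pos (hθ1pos s') (Finset.prod_pos fun j _ => hℓ j s')
  have hZ : ∀ t, 0 < ∑ s'', θ1 s'' * ∏ j ∈ Finset.range t, ℓ j s'' := fun t =>
    Finset.sum_pos (fun i _ => hnum t i) Finset.univ_nonempty
  have hppos : ∀ t s', 0 < post t s' := by
    intro t s'
    rw [hpost]
    exact div_pos (hnum t s') (hZ t)
  have hle1 : ∀ t, post t sstar ≤ 1 := by
    intro t
    rw [hpost, div_le_one (hZ t)]
    exact Finset.single_le_sum (fun i _ => (hnum t i).le) (Finset.mem_univ sstar)
  have hlog : ∀ t s', Real.log (post t s')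
      = Real.log (θ1 s') + ∑ j ∈ Finset.range t, Real.log (ℓ j s')
        - Real.log (∑ s'', θ1 s'' * ∏ j ∈ Finset.range t, ℓ j s'') := by
    intro t s'
    rw [hpost, Real.log_div (hnum t s').ne' (hZ t).ne',
      Real.log_mul (hθ1pos s').ne' (Finset.prod_pos fun j _ => hℓ j s').ne',
      Real.log_prod (fun j _ => (hℓ j s').ne')]
  have key : ∀ t, Real.log (post t s)
      = Real.log (post t sstar) + (Real.log (θ1 s) - Real.log (θ1 sstar))
        + ∑ j ∈ Finset.range t, Real.log (ℓ j s / ℓ j sstar) := by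
    intro t
    have hsum : ∑ j ∈ Finset.range t, Real.log (ℓ j s / ℓ j sstar)
        = ∑ j ∈ Finset.range t, (Real.log (ℓ j s) - Real.log (ℓ j sstar)) :=
      Finset.sum_congr rfl fun j _ => Real.log_div (hℓ j s).ne' (hℓ j sstar).ne'
    rw [hlog t s, hlog t sstar, hsum, Finset.sum_sub_distrib]
    ring
  have heq : (fun t : ℕ => (1 / (t : ℝ)) * Real.log (post t s))
      = fun t : ℕ => ((1 / (t : ℝ)) * Real.log (post t sstar)
          + (1 / (t : ℝ)) * (Real.log (θ1 s) - Real.log (θ1 sstar)))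
        + (1 / (t : ℝ)) * ∑ j ∈ Finset.range t, Real.log (ℓ j s / ℓ j sstar) := by
    funext t; rw [key]; ring
  rw [heq]
  have hinv : Tendsto (fun t : ℕ => 1 / (t : ℝ)) atTop (nhds 0) :=
    tendsto_one_div_atTop_nhds_zero_nat
  have h1 : Tendsto (fun t : ℕ => (1 / (t : ℝ)) * Real.log (post t sstar)) atTop (nhds 0) := by
    apply tendsto_of_tendsto_of_tendsto_of_le_of_le'
      (g := fun t : ℕ => (1 / (t : ℝ)) * Real.log c) (h := fun _ : ℕ => (0 : ℝ))
    · simpa using hinv.mul_const (Real.log c)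
    · exact tendsto_const_nhds
    · filter_upwards [eventually_ge_atTop 1] with t ht
      have h0 : (0 : ℝ) ≤ 1 / (t : ℝ) := by positivity
      exact mul_le_mul_of_nonneg_left (Real.log_le_log hc (hlb t)) h0
    · filter_upwards [eventually_ge_atTop 1] with t ht
      have h0 : (0 : ℝ) ≤ 1 / (t : ℝ) := by positivity
      exact mul_nonpos_of_nonneg_of_nonpos h0 (Real.log_nonpos (hppos t sstar).le (hle1 t))
  have h2 : Tendsto (fun t : ℕ => (1 / (t : ℝ)) * (Real.log (θ1 s) - Real.log (θ1 sstar)))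
      atTop (nhds 0) := by
    simpa using hinv.mul_const (Real.log (θ1 s) - Real.log (θ1 sstar))
  have := (h1.add h2).add hrate
  simpa using this
end

section
/- Let (Ω, 𝓕, P) be a probability space with filtration (𝓕_t)_{t∈ℕ}, and let (θ_t) be a Δ(S)-valued adapted process with θ_t(s*) > 0 a.s. such that for each s ∈ S the ratio process (θ_t(s)/θ_t(s*)) is a martingale. Let B ⊆ S \ {s*}, and let α ∈ (0,1) and ρ₁, ρ₂ > 0 satisfy ρ₁/α < ρ₂. Suppose that almost surely θ_0(s) < ρ₁ for every s ∈ B and θ_0(s*) > α. Then P( θ_t(s) ≤ ρ₂ for every s ∈ B and every t ∈ ℕ ) ≥ 1 − |B| · (ρ₁/α) / (ρ₂ − ρ₁/α). (This is the generic form of the paper's stopping-time lemma: if the initial beliefs of parameters outside the support of a fixed-point belief are small, then with high probability they remain small forever.) -/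
open MeasureTheory Filter
open scoped ENNReal NNReal

/-- **Stopping-time lemma (generic form).** If initially the beliefs of all parameters
in `B ⊆ S \ {s*}` are below `ρ₁` and the belief of the true parameter exceeds `α`, then
with probability at least `1 − |B| (ρ₁/α)/(ρ₂ − ρ₁/α)` the beliefs of all parameters in
`B` stay below `ρ₂` forever. -/
theorem beliefs_stay_small
    {Ω : Type*} {mΩ : MeasurableSpace Ω} {P : Measure Ω} [IsProbabilityMeasure P]
    {S : Type*} [Fintype S] (sstar : S)
    (𝓕 : Filtration ℕ mΩ)
    (θ : ℕ → Ω → S → ℝ)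
    (hΔ : ∀ t ω, θ t ω ∈ stdSimplex ℝ S)
    (hadapted : ∀ s : S, Adapted 𝓕 (fun t ω => θ t ω s))
    (hpos : ∀ t, ∀ᵐ ω ∂P, 0 < θ t ω sstar)
    (hmart : ∀ s : S, Martingale (fun t ω => θ t ω s / θ t ω sstar) 𝓕 P)
    (B : Finset S) (hB : sstar ∉ B)
    (α ρ1 ρ2 : ℝ) (hα0 : 0 < α) (hα1 : α < 1) (hρ1 : 0 < ρ1) (hρ2 : 0 < ρ2)
    (hratio : ρ1 / α < ρ2)
    (hinit : ∀ᵐ ω ∂P, (∀ s ∈ B, θ 0 ω s < ρ1) ∧ α < θ 0 ω sstar) :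
    ENNReal.ofReal (1 - (B.card : ℝ) * (ρ1 / α) / (ρ2 - ρ1 / α))
      ≤ P {ω | ∀ s ∈ B, ∀ t, θ t ω s ≤ ρ2} := by
  classical
  set q : ℝ := ρ1 / α with hqdef
  have hq0 : 0 < q := div_pos hρ1 hα0
  have hq2 : q < ρ2 := hratio
  have hmeasθ : ∀ (t : ℕ) (s : S), Measurable fun ω => θ t ω s := fun t s =>
    Measurable.le (𝓕.le t) (hadapted s t)
  set A : Set Ω := {ω | ∀ s ∈ B, ∀ t, θ t ω s ≤ ρ2} with hAdef
  have hAmeas : MeasurableSet A := by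
    have : A = ⋂ s ∈ B, ⋂ t, {ω | θ t ω s ≤ ρ2} := by
      ext ω; simp [hAdef, Set.mem_iInter]
    rw [this]
    exact MeasurableSet.biInter B.countable_toSet fun s _ =>
      MeasurableSet.iInter fun t => measurableSet_le (hmeasθ t s) measurable_const
  have hposall : ∀ᵐ ω ∂P, ∀ t, 0 < θ t ω sstar := ae_all_iff.2 hpos
  -- per-parameter bound
  have key : ∀ s ∈ B, P {ω | ∃ t, ρ2 < θ t ω s} ≤ ENNReal.ofReal (q / ρ2) := by
    intro s hs
    set M : ℕ → Ω → ℝ := fun t ω => θ t ω s / θ t ω sstar with hMdef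
    have hMnonneg : 0 ≤ M := fun t ω =>
      div_nonneg ((hΔ t ω).1 s) ((hΔ t ω).1 sstar)
    -- The expectation of M n is at most q
    have hint : ∀ n, ∫ ω, M n ω ∂P ≤ q := by
      intro n
      have h0 : ∫ ω, M n ω ∂P = ∫ ω, M 0 ω ∂P := by
        have := (hmart s).setIntegral_eq (Nat.zero_le n) (MeasurableSet.univ)
        simpa [setIntegral_univ] using this.symm
      rw [h0]
      have hle : ∀ᵐ ω ∂P, M 0 ω ≤ q := by
        filter_upwards [hinit] with ω hω
        exact div_le_div₀ hρ1.le (hω.1 s hs).le hα0 hω.2.le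
      calc ∫ ω, M 0 ω ∂P ≤ ∫ _ω, q ∂P :=
            integral_mono_ae ((hmart s).integrable 0) (integrable_const q) hle
        _ = q := by simp
    -- Doob's maximal inequality for each horizon n
    set D : ℕ → Set Ω := fun n =>
      {ω | (ρ2.toNNReal : ℝ) ≤ (Finset.range (n + 1)).sup'
        Finset.nonempty_range_add_one fun k => M k ω} with hDdef
    have hDbound : ∀ n, P (D n) ≤ ENNReal.ofReal (q / ρ2) := by
      intro n
      have hmax := maximal_ineq (μ := P) ((hmart s).submartingale) hMnonneg
        (ε := ρ2.toNNReal) n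
      have hsetint : ENNReal.ofReal (∫ ω in D n, M n ω ∂P) ≤ ENNReal.ofReal q := by
        refine ENNReal.ofReal_le_ofReal ?_
        calc ∫ ω in D n, M n ω ∂P ≤ ∫ ω, M n ω ∂P :=
              setIntegral_le_integral ((hmart s).integrable n)
                (Filter.Eventually.of_forall fun ω => hMnonneg n ω)
          _ ≤ q := hint n
      have h1 : (ρ2.toNNReal : ℝ≥0∞) * P (D n) ≤ ENNReal.ofReal q :=
        le_trans hmax hsetint
      have hρ2' : (ρ2.toNNReal : ℝ≥0∞) = ENNReal.ofReal ρ2 := rfl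
      rw [hρ2'] at h1
      rw [ENNReal.ofReal_div_of_pos hρ2]
      rw [ENNReal.le_div_iff_mul_le (Or.inl (ENNReal.ofReal_pos.2 hρ2).ne')
        (Or.inl ENNReal.ofReal_ne_top), mul_comm]
      exact h1
    -- the relevant event is a.e. included in the union of the D n
    have hsub : {ω | ∃ t, ρ2 < θ t ω s} ≤ᵐ[P] ⋃ n, D n := by
      filter_upwards [hposall] with ω hω
      intro hmem
      obtain ⟨t, ht⟩ := hmem
      have hθ1 : θ t ω sstar ≤ 1 := by
        have hsum := (hΔ t ω).2
        calc θ t ω sstar ≤ ∑ i, θ t ω i :=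
              Finset.single_le_sum (fun i _ => (hΔ t ω).1 i) (Finset.mem_univ sstar)
          _ = 1 := hsum
      have hMle : θ t ω s ≤ M t ω := by
        have h1 : θ t ω s = M t ω * θ t ω sstar :=
          (div_mul_cancel₀ (θ t ω s) (hω t).ne').symm
        rw [h1]
        calc M t ω * θ t ω sstar ≤ M t ω * 1 :=
              mul_le_mul_of_nonneg_left hθ1 (hMnonneg t ω)
          _ = M t ω := mul_one _
      refine Set.mem_iUnion.2 ⟨t, ?_⟩
      have : (ρ2.toNNReal : ℝ) ≤ M t ω := by
        rw [Real.coe_toNNReal _ hρ2.le]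
        exact le_trans ht.le hMle
      exact le_trans this (Finset.le_sup' (fun k => M k ω)
        (Finset.mem_range.2 (Nat.lt_succ_self t)))
    -- monotone union
    have hmono : Monotone D := by
      intro n m hnm ω hω
      simp only [hDdef, Set.mem_setOf_eq] at hω ⊢
      refine le_trans hω ?_
      exact Finset.sup'_mono (fun k => M k ω)
        (Finset.range_subset_range.2 (Nat.succ_le_succ hnm)) Finset.nonempty_range_add_one
    calc P {ω | ∃ t, ρ2 < θ t ω s} ≤ P (⋃ n, D n) := measure_mono_ae hsub
      _ = ⨆ n, P (D n) := (hmono.directed_le).measure_iUnion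
      _ ≤ ENNReal.ofReal (q / ρ2) := iSup_le hDbound
  -- bound on the complement
  have hcompl : P Aᶜ ≤ ENNReal.ofReal ((B.card : ℝ) * q / (ρ2 - q)) := by
    have hsub : Aᶜ ⊆ ⋃ s ∈ B, {ω | ∃ t, ρ2 < θ t ω s} := by
      intro ω hω
      simp only [hAdef, Set.mem_compl_iff, Set.mem_setOf_eq, not_forall, not_le] at hω
      obtain ⟨s, hs, t, ht⟩ := hω
      exact Set.mem_biUnion hs ⟨t, ht⟩
    calc P Aᶜ ≤ ∑ s ∈ B, P {ω | ∃ t, ρ2 < θ t ω s} :=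
          le_trans (measure_mono hsub) (measure_biUnion_finset_le B _)
      _ ≤ ∑ _s ∈ B, ENNReal.ofReal (q / ρ2) := Finset.sum_le_sum key
      _ = (B.card : ℝ≥0∞) * ENNReal.ofReal (q / ρ2) := by
          rw [Finset.sum_const, nsmul_eq_mul]
      _ = ENNReal.ofReal ((B.card : ℝ) * (q / ρ2)) := by
          rw [ENNReal.ofReal_mul (by positivity)]
          simp [ENNReal.ofReal_natCast]
      _ ≤ ENNReal.ofReal ((B.card : ℝ) * q / (ρ2 - q)) := by
          refine ENNReal.ofReal_le_ofReal ?_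
          rw [mul_div_assoc]
          refine mul_le_mul_of_nonneg_left ?_ (Nat.cast_nonneg _)
          exact div_le_div_of_nonneg_left hq0.le (by linarith) (by linarith)
  -- conclude
  have hc' : (0:ℝ) ≤ (B.card : ℝ) * q / (ρ2 - q) :=
    div_nonneg (mul_nonneg (Nat.cast_nonneg _) hq0.le) (by linarith)
  have hPA1 : P A ≤ 1 := prob_le_one
  calc ENNReal.ofReal (1 - (B.card : ℝ) * q / (ρ2 - q))
      = 1 - ENNReal.ofReal ((B.card : ℝ) * q / (ρ2 - q)) := by
        rw [ENNReal.ofReal_sub _ hc', ENNReal.ofReal_one]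
    _ ≤ 1 - P Aᶜ := tsub_le_tsub_left hcompl 1
    _ = P A := by
        rw [prob_compl_eq_one_sub hAmeas, ENNReal.sub_sub_cancel ENNReal.one_ne_top hPA1]
end

section
/- Suppose each Q_i is convex. Let θ̄ ∈ Δ(S) and let q̄ ∈ EQ(θ̄) be a Nash equilibrium of the expected game with payoffs Σ_s θ̄(s) u_i^s. Assume: (i) there exists ξ > 0 such that for every q ∈ Q with ‖q − q̄‖ < ξ and every player i, Σ_{s∈S} θ̄(s) u_i^s(q) = u_i^{s*}(q); and (ii) for every player i and every s ∈ supp θ̄ ∪ {s*}, the map q_i ↦ u_i^s(q_i, q̄_{−i}) is concave on Q_i. Then q̄ is a Nash equilibrium of the complete-information game with payoffs u_i^{s*}: for every i and every q_i' ∈ Q_i, u_i^{s*}(q̄) ≥ u_i^{s*}(q_i', q̄_{−i}). (This is the second part of Proposition 1: under local payoff equivalence and concavity, a fixed-point strategy is a complete information equilibrium.) -/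
/-- **Proposition 1 (second part).** Let `q̄ ∈ EQ(θ̄)` be an equilibrium of the expected
game. If (i) the expected payoff coincides with the true payoff `u_i^{s*}` for all
profiles in `Q` within distance `ξ` of `q̄`, and (ii) for every player `i` and every
parameter in `supp θ̄ ∪ {s*}` the payoff is concave in own strategy at `q̄_{−i}`, then
`q̄` is a Nash equilibrium of the complete-information game with payoffs `u_i^{s*}`. -/
theorem fixed_point_is_complete_information_equilibrium
    {S : Type*} [Fintype S] (sstar : S)
    {I : Type*} [Fintype I] [DecidableEq I] {n : I → ℕ}
    (Q : ∀ i, Set (Fin (n i) → ℝ)) (hconv : ∀ i, Convex ℝ (Q i))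
    (u : I → S → (∀ i, Fin (n i) → ℝ) → ℝ)
    (θbar : S → ℝ) (hθ : θbar ∈ stdSimplex ℝ S)
    (qbar : ∀ i, Fin (n i) → ℝ)
    (hqQ : qbar ∈ Set.pi Set.univ Q)
    (hNash : ∀ i, ∀ x ∈ Q i,
      (∑ s, θbar s * u i s (Function.update qbar i x)) ≤ ∑ s, θbar s * u i s qbar)
    (ξ : ℝ) (hξ : 0 < ξ)
    (hloc : ∀ q ∈ Set.pi Set.univ Q, ‖q - qbar‖ < ξ →
      ∀ i, (∑ s, θbar s * u i s q) = u i sstar q)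
    (hconc : ∀ i, ∀ s, (0 < θbar s ∨ s = sstar) →
      ConcaveOn ℝ (Q i) (fun x => u i s (Function.update qbar i x))) :
    ∀ i, ∀ x ∈ Q i, u i sstar (Function.update qbar i x) ≤ u i sstar qbar := by
  intro i x hx
  have hcQ : qbar i ∈ Q i := hqQ i (Set.mem_univ i)
  set d : ℝ := ‖x - qbar i‖ with hd
  have hd0 : 0 ≤ d := norm_nonneg _
  have hden : (0:ℝ) < 2 * (d + 1) := by linarith
  set t : ℝ := min (1/2) (ξ / (2 * (d + 1))) with ht
  have ht0 : 0 < t := lt_min (by norm_num) (div_pos hξ hden)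
  have ht1 : t ≤ 1/2 := min_le_left _ _
  have htd : t * d < ξ := by
    have h1 : t ≤ ξ / (2 * (d + 1)) := min_le_right _ _
    have h2 : ξ / (2 * (d + 1)) * d < ξ := by
      rw [div_mul_eq_mul_div, div_lt_iff₀ hden]; nlinarith
    nlinarith
  set y : Fin (n i) → ℝ := (1 - t) • qbar i + t • x with hy
  have hyQ : y ∈ Q i := hconv i hcQ hx (by linarith) (le_of_lt ht0) (by ring)
  set q := Function.update qbar i y with hq
  have hqmem : q ∈ Set.pi Set.univ Q := by
    intro j _
    rcases eq_or_ne j i with rfl | hji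
    · simpa [hq] using hyQ
    · simpa [hq, Function.update_of_ne hji] using hqQ j (Set.mem_univ j)
  have hnorm : ‖q - qbar‖ < ξ := by
    rw [pi_norm_lt_iff hξ]
    intro j
    rcases eq_or_ne j i with rfl | hji
    · have hdiff : (q - qbar) j = t • (x - qbar j) := by
        simp only [hq, Pi.sub_apply, Function.update_self, hy]
        funext k
        simp [smul_eq_mul]
        ring
      rw [hdiff, norm_smul]
      simpa [abs_of_pos ht0] using htd
    · simp [hq, Function.update_of_ne hji, hξ]
  have hNq : (∑ s, θbar s * u i s q) ≤ ∑ s, θbar s * u i s qbar := hNash i y hyQ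
  have hloc1 : (∑ s, θbar s * u i s q) = u i sstar q := hloc q hqmem hnorm i
  have hloc2 : (∑ s, θbar s * u i s qbar) = u i sstar qbar := by
    have := hloc qbar hqQ (by simpa using hξ) i
    exact this
  have hkey : u i sstar q ≤ u i sstar qbar := by
    rw [← hloc1, ← hloc2]; exact hNq
  have hconc' := (hconc i sstar (Or.inr rfl)).2 hcQ hx (by linarith : (0:ℝ) ≤ 1 - t)
    (le_of_lt ht0) (by ring)
  have hqbar : Function.update qbar i (qbar i) = qbar := Function.update_eq_self i qbar
  have hconc'' : (1 - t) * u i sstar qbar + t * u i sstar (Function.update qbar i x)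
      ≤ u i sstar q := by
    simpa [hq, hy, hqbar, smul_eq_mul] using hconc'
  nlinarith
end

section
/- Consider the two-player zero-sum game with strategy sets Q_1 = Q_2 = [0,6], parameter set S = {1,3,5}, and value function v^s(q) = (max(|q_1 − q_2|, s) − s)² − 2 q_1², where player 1's payoff is v^s and player 2's payoff is −v^s. Then for every θ ∈ Δ(S), the set of Nash equilibria of the expected game with value Σ_{s∈S} θ(s) v^s is exactly { (q_1, q_2) ∈ [0,6]² : q_1 = 0 and q_2 ≤ min(supp θ) }. (This is the equilibrium characterization underlying Example 2.) -/
/-- Player 1's payoff in the zero-sum game with parameter value `s`. -/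
noncomputable def zsVal (s q1 q2 : ℝ) : ℝ := (max |q1 - q2| s - s) ^ 2 - 2 * q1 ^ 2

/-- The three possible values of the unknown parameter. -/
noncomputable def zsS : Fin 3 → ℝ := ![1, 3, 5]

lemma zsS_pos (s : Fin 3) : (0:ℝ) < zsS s := by fin_cases s <;> norm_num [zsS]

lemma zsVal_nonpos {s x q2 : ℝ} (hx : 0 ≤ x) (hq : 0 ≤ q2) (hqs : q2 ≤ s) :
    zsVal s x q2 ≤ 0 := by
  unfold zsVal
  have h1 : (max |x - q2| s - s) ^ 2 ≤ x ^ 2 := by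
    rcases le_or_gt |x - q2| s with h | h
    · rw [max_eq_right h]
      simpa using sq_nonneg x
    · rw [max_eq_left h.le]
      have hd : |x - q2| = x - q2 := by
        rcases abs_cases (x - q2) with ⟨h1, _⟩ | ⟨h1, h2⟩
        · exact h1
        · exfalso; rw [h1] at h; linarith
      rw [hd] at h ⊢
      apply sq_le_sq' <;> nlinarith
  nlinarith [sq_nonneg x]

lemma zsVal_zero_nonneg (s y : ℝ) : 0 ≤ zsVal s 0 y := by
  unfold zsVal
  nlinarith [sq_nonneg (max |0 - y| s - s)]

lemma zsVal_zero_eq {s q2 : ℝ} (hq : 0 ≤ q2) (hqs : q2 ≤ s) : zsVal s 0 q2 = 0 := by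
  unfold zsVal
  have : |0 - q2| = q2 := by rw [abs_sub_comm]; simpa using abs_of_nonneg hq
  rw [this, max_eq_right hqs]
  ring

lemma zsVal_diag (s q : ℝ) (hs : 0 ≤ s) : zsVal s q q = -2 * q ^ 2 := by
  unfold zsVal
  simp [abs_of_nonneg, hs, max_eq_right hs]

/-- **Example 2 (zero-sum game equilibria).** For every belief `θ` on `S = {1,3,5}`, the
Nash equilibria of the expected zero-sum game with value `Σ_s θ(s) v^s` are exactly the
profiles with `q₁ = 0` and `q₂ ≤ min(supp θ)`. -/
theorem zero_sum_equilibria (θ : Fin 3 → ℝ) (hθ : θ ∈ stdSimplex ℝ (Fin 3)) :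
    {q : ℝ × ℝ | q.1 ∈ Set.Icc (0 : ℝ) 6 ∧ q.2 ∈ Set.Icc (0 : ℝ) 6 ∧
      (∀ x ∈ Set.Icc (0 : ℝ) 6,
        (∑ s, θ s * zsVal (zsS s) x q.2) ≤ ∑ s, θ s * zsVal (zsS s) q.1 q.2) ∧
      (∀ y ∈ Set.Icc (0 : ℝ) 6,
        (∑ s, θ s * zsVal (zsS s) q.1 q.2) ≤ ∑ s, θ s * zsVal (zsS s) q.1 y)}
    = {q : ℝ × ℝ | q.1 = 0 ∧ q.2 ∈ Set.Icc (0 : ℝ) 6 ∧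
        q.2 ≤ sInf {x : ℝ | ∃ s, 0 < θ s ∧ zsS s = x}} := by
  obtain ⟨hθ0, hθ1⟩ := hθ
  -- the support set is nonempty and bounded below
  have hex : ∃ s, 0 < θ s := by
    by_contra h
    push_neg at h
    have : ∀ s, θ s = 0 := fun s => le_antisymm (h s) (hθ0 s)
    simp [this] at hθ1
  have hbdd : BddBelow {x : ℝ | ∃ s, 0 < θ s ∧ zsS s = x} := by
    refine ⟨1, fun x hx => ?_⟩
    obtain ⟨s, _, rfl⟩ := hx
    fin_cases s <;> norm_num [zsS]
  have hne : {x : ℝ | ∃ s, 0 < θ s ∧ zsS s = x}.Nonempty := by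
    obtain ⟨s, hs⟩ := hex
    exact ⟨zsS s, s, hs, rfl⟩
  ext q
  obtain ⟨q1, q2⟩ := q
  simp only [Set.mem_setOf_eq]
  constructor
  · rintro ⟨h1, h2, hmax, hmin⟩
    -- F q1 q1 = -2 q1^2
    have hdiag : (∑ s, θ s * zsVal (zsS s) q1 q1) = -2 * q1 ^ 2 := by
      have : ∀ s : Fin 3, θ s * zsVal (zsS s) q1 q1 = θ s * (-2 * q1 ^ 2) := by
        intro s; rw [zsVal_diag _ _ (zsS_pos s).le]
      rw [Finset.sum_congr rfl (fun s _ => this s), ← Finset.sum_mul, hθ1, one_mul]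
    have hA : (∑ s, θ s * zsVal (zsS s) q1 q2) ≤ -2 * q1 ^ 2 := by
      have := hmin q1 h1
      rwa [hdiag] at this
    have hB : 0 ≤ ∑ s, θ s * zsVal (zsS s) 0 q2 :=
      Finset.sum_nonneg fun s _ => mul_nonneg (hθ0 s) (zsVal_zero_nonneg _ _)
    have hC : (∑ s, θ s * zsVal (zsS s) 0 q2) ≤ ∑ s, θ s * zsVal (zsS s) q1 q2 :=
      hmax 0 (by norm_num)
    have hq1 : q1 = 0 := by nlinarith
    subst hq1
    refine ⟨rfl, h2, ?_⟩
    have hzero : (∑ s, θ s * zsVal (zsS s) 0 q2) = 0 := le_antisymm (by linarith) hB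
    have hterm : ∀ s ∈ Finset.univ, θ s * zsVal (zsS s) 0 q2 = 0 :=
      (Finset.sum_eq_zero_iff_of_nonneg
        (fun s _ => mul_nonneg (hθ0 s) (zsVal_zero_nonneg _ _))).mp hzero
    refine le_csInf hne ?_
    rintro x ⟨s, hs, rfl⟩
    have h0 : zsVal (zsS s) 0 q2 = 0 := by
      have := hterm s (Finset.mem_univ s)
      rcases mul_eq_zero.mp this with h | h
      · exact absurd h hs.ne'
      · exact h
    unfold zsVal at h0
    have habs : |0 - q2| = q2 := by
      rw [abs_sub_comm]; simpa using abs_of_nonneg h2.1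
    rw [habs] at h0
    have h0' : (max q2 (zsS s) - zsS s) ^ 2 = 0 := by nlinarith
    have := pow_eq_zero_iff (n := 2) (by norm_num) |>.mp h0'
    have hm : max q2 (zsS s) = zsS s := by linarith
    exact le_of_max_le_left hm.le
  · rintro ⟨hq1, h2, hle⟩
    have hq2s : ∀ s : Fin 3, 0 < θ s → q2 ≤ zsS s := by
      intro s hs
      exact hle.trans (csInf_le hbdd ⟨s, hs, rfl⟩)
    have hF0 : (∑ s, θ s * zsVal (zsS s) 0 q2) = 0 := by
      apply Finset.sum_eq_zero
      intro s _
      rcases (hθ0 s).lt_or_eq with h | h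
      · rw [zsVal_zero_eq h2.1 (hq2s s h)]; ring
      · rw [← h]; ring
    refine ⟨by rw [hq1]; norm_num, h2, ?_, ?_⟩
    · intro x hx
      rw [hq1, hF0]
      apply Finset.sum_nonpos
      intro s _
      rcases (hθ0 s).lt_or_eq with h | h
      · exact mul_nonpos_of_nonneg_of_nonpos h.le (zsVal_nonpos hx.1 h2.1 (hq2s s h))
      · rw [← h]; simp
    · intro y hy
      rw [hq1, hF0]
      exact Finset.sum_nonneg fun s _ => mul_nonneg (hθ0 s) (zsVal_zero_nonneg _ _)
end
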